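/- arXiv:2510.03624 — 2 statements merged into one kernel-verified Lean document; each statement's English description precedes it below -/
import Mathlib

section
/- For any two matrices A, B ∈ ℝ^{m₁×m₂} and a > 0, the matrix TL1 penalty satisfies the triangle inequality φ_a(A + B) ≤ φ_a(A) + φ_a(B), where φ_a(A) = Σ_{i,j} (a+1)|A_{ij}|/(a + |A_{ij}|). -/
lemma tl1_scalar (a : ℝ) (ha : 0 < a) (u x y : ℝ) (hu : 0 ≤ u) (hx : 0 ≤ x)
    (hy : 0 ≤ y) (huxy : u ≤ x + y) :
    (a + 1) * u / (a + u) ≤ (a + 1) * x / (a + x) + (a + 1) * y / (a + y) := by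
  have hau : 0 < a + u := by linarith
  have hax : 0 < a + x := by linarith
  have hay : 0 < a + y := by linarith
  rw [div_add_div _ _ (ne_of_gt hax) (ne_of_gt hay), div_le_div_iff₀ hau (by positivity)]
  have h1 : 0 ≤ a * a * (x + y - u) := mul_nonneg (mul_nonneg ha.le ha.le) (by linarith)
  have h2 : 0 ≤ a * (x * y) := mul_nonneg ha.le (mul_nonneg hx hy)
  have h3 : 0 ≤ x * y * u := mul_nonneg (mul_nonneg hx hy) hu
  have h4 : (0:ℝ) < a + 1 := by linarith
  nlinarith [mul_nonneg h4.le h1, mul_nonneg h4.le h2, mul_nonneg h4.le h3]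

theorem tl1_matrix_triangle (m₁ m₂ : ℕ) (a : ℝ) (ha : 0 < a)
    (A B : Matrix (Fin m₁) (Fin m₂) ℝ) :
    ∑ i, ∑ j, (a + 1) * |A i j + B i j| / (a + |A i j + B i j|) ≤
      (∑ i, ∑ j, (a + 1) * |A i j| / (a + |A i j|)) +
      ∑ i, ∑ j, (a + 1) * |B i j| / (a + |B i j|) := by
  rw [← Finset.sum_add_distrib]
  refine Finset.sum_le_sum fun i _ => ?_
  rw [← Finset.sum_add_distrib]
  refine Finset.sum_le_sum fun j _ => ?_
  exact tl1_scalar a ha _ _ _ (abs_nonneg _) (abs_nonneg _) (abs_nonneg _) (abs_add_le _ _)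
end

section
/- For any two matrices A, B ∈ ℝ^{m₁×m₂} and a > 0, φ_a(A) − φ_a(B) ≤ φ_a(A − B), where φ_a(A) = Σ_{i,j} (a+1)|A_{ij}|/(a + |A_{ij}|). -/
lemma tl1_key (a x y z : ℝ) (ha : 0 < a) (hx : 0 ≤ x) (hy : 0 ≤ y) (hz : 0 ≤ z)
    (h : x ≤ y + z) :
    (a + 1) * x / (a + x) - (a + 1) * y / (a + y) ≤ (a + 1) * z / (a + z) := by
  have hax : 0 < a + x := by linarith
  have hay : 0 < a + y := by linarith
  have haz : 0 < a + z := by linarith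
  rw [div_sub_div _ _ hax.ne' hay.ne', div_le_div_iff₀ (by positivity) haz]
  have h1 : x - y ≤ z := by linarith
  have h2 : (x - y) * (a * a) ≤ z * (a * a) :=
    mul_le_mul_of_nonneg_right h1 (by positivity)
  have h3 : a * ((x - y) * z) ≤ a * ((x + y) * z) :=
    mul_le_mul_of_nonneg_left (mul_le_mul_of_nonneg_right (by linarith) hz) ha.le
  have key : a * (x - y) * (a + z) ≤ z * ((a + x) * (a + y)) := by
    nlinarith [mul_nonneg (mul_nonneg hx hy) hz]
  nlinarith [mul_le_mul_of_nonneg_left key (show (0:ℝ) ≤ a + 1 by linarith)]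

theorem tl1_matrix_reverse_triangle (m₁ m₂ : ℕ) (a : ℝ) (ha : 0 < a)
    (A B : Matrix (Fin m₁) (Fin m₂) ℝ) :
    (∑ i, ∑ j, (a + 1) * |A i j| / (a + |A i j|)) -
      (∑ i, ∑ j, (a + 1) * |B i j| / (a + |B i j|)) ≤
      ∑ i, ∑ j, (a + 1) * |A i j - B i j| / (a + |A i j - B i j|) := by
  rw [← Finset.sum_sub_distrib]
  apply Finset.sum_le_sum
  intro i _
  rw [← Finset.sum_sub_distrib]
  apply Finset.sum_le_sum
  intro j _
  apply tl1_key a _ _ _ ha (abs_nonneg _) (abs_nonneg _) (abs_nonneg _)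
  have := abs_sub_abs_le_abs_sub (A i j) (B i j)
  linarith
end
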